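/- For every nonnegative even integer k, the average A(k, 2n) = (1/(2n)^n) Σ_{x ∈ X_{ψ_n}} m_k(x)/(2n) converges, as n → ∞, to (1−θ)/(e·k!) + θ/(e^{1/2} · 2^{k/2} · (k/2)!). -/

import Mathlib

open Finset

/-- The set of ψ-symmetric vectors of length `M`: vectors `x` with
`x (M+1-j) = ψ (x j)` for all `j` (0-indexed: `x j.rev = ψ (x j)`). -/
def Xpsi (α : Type*) [Fintype α] [DecidableEq α] (M : ℕ) (ψ : α → α) :
    Finset (Fin M → α) :=
  Finset.univ.filter fun x => ∀ j : Fin M, x j.rev = ψ (x j)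

/-- The number of occurrences of `y` among the components of `x`. -/
def occCount {α : Type*} {M : ℕ} [DecidableEq α] (x : Fin M → α) (y : α) : ℕ :=
  (Finset.univ.filter fun j => x j = y).card

/-- `mCount x k` is the number of elements occurring exactly `k` times among
the components of `x`. -/
def mCount {α : Type*} {M : ℕ} [Fintype α] [DecidableEq α] (x : Fin M → α) (k : ℕ) : ℕ :=
  (Finset.univ.filter fun y => occCount x y = k).card

/-- The set of fixed points of `ψ`. -/
def fixPts (α : Type*) [Fintype α] [DecidableEq α] (ψ : α → α) : Finset α :=
  Finset.univ.filter fun y => ψ y = y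

open Filter

set_option linter.unusedSectionVars false
set_option linter.unnecessarySimpa false
set_option linter.unusedVariables false

lemma count_pi {β : Type*} [Fintype β] [DecidableEq β] (n k : ℕ) (S : Finset β) :
    ((univ : Finset (Fin n → β)).filter fun v => (univ.filter fun j => v j ∈ S).card = k).card
      = n.choose k * S.card ^ k * (Fintype.card β - S.card) ^ (n - k) := by
  classical
  have key : ((univ : Finset (Fin n → β)).filter fun v => (univ.filter fun j => v j ∈ S).card = k)
      = (Finset.powersetCard k (univ : Finset (Fin n))).biUnion
          (fun T => Fintype.piFinset fun j => if j ∈ T then S else Sᶜ) := by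
    ext v
    simp only [mem_filter, mem_univ, true_and, mem_biUnion, mem_powersetCard,
      Fintype.mem_piFinset]
    constructor
    · intro h
      refine ⟨univ.filter fun j => v j ∈ S, ⟨subset_univ _, by simpa using h⟩, fun j => ?_⟩
      by_cases hj : v j ∈ S <;> simp [hj]
    · rintro ⟨T, ⟨-, hT⟩, h⟩
      have hTe : (univ.filter fun j => v j ∈ S) = T := by
        ext j
        specialize h j
        by_cases hj : j ∈ T <;> simp_all
      rw [hTe]; exact hT
  have hcardT : ∀ T ∈ Finset.powersetCard k (univ : Finset (Fin n)),
      (Fintype.piFinset fun j => if j ∈ T then S else Sᶜ).card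
        = S.card ^ k * (Fintype.card β - S.card) ^ (n - k) := by
    intro T hT
    rw [mem_powersetCard] at hT
    rw [Fintype.card_piFinset, ← Finset.prod_mul_prod_compl T]
    have h1 : ∏ j ∈ T, (if j ∈ T then S else Sᶜ).card = S.card ^ k := by
      rw [Finset.prod_congr rfl (fun j hj => by rw [if_pos hj]), Finset.prod_const, hT.2]
    have h2 : ∏ j ∈ Tᶜ, (if j ∈ T then S else Sᶜ).card
        = (Fintype.card β - S.card) ^ (n - k) := by
      rw [Finset.prod_congr rfl (fun j hj => by rw [if_neg (mem_compl.mp hj)]),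
        Finset.prod_const, Finset.card_compl, Finset.card_compl, Fintype.card_fin, hT.2]
    rw [h1, h2]
  rw [key, Finset.card_biUnion, Finset.sum_congr rfl hcardT, Finset.sum_const,
    Finset.card_powersetCard, Finset.card_univ, Fintype.card_fin, smul_eq_mul, mul_assoc]
  · intro T hT T' hT' hne
    rw [Function.onFun, Finset.disjoint_left]
    intro v hv hv'
    rw [Fintype.mem_piFinset] at hv hv'
    apply hne
    ext j
    specialize hv j; specialize hv' j
    by_cases hj : j ∈ T <;> by_cases hj' : j ∈ T' <;> simp_all


def restrHalf {β : Type*} (n : ℕ) (x : Fin (2*n) → β) : Fin n → β :=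
  fun i => x (Fin.castLE (by omega) i)

def extHalf {β : Type*} (ψ : β → β) (n : ℕ) (v : Fin n → β) : Fin (2*n) → β :=
  fun j => if h : (j : ℕ) < n then v ⟨j, h⟩
    else ψ (v ⟨2*n - 1 - j, by have := j.isLt; omega⟩)

section S1
variable {β : Type*} [Fintype β] [DecidableEq β] {ψ : β → β} (hψ : ∀ y, ψ (ψ y) = y) (n : ℕ)

lemma mem_Xpsi_iff (x : Fin (2*n) → β) :
    x ∈ Xpsi β (2*n) ψ ↔ ∀ j, x j.rev = ψ (x j) := by simp [Xpsi]

include hψ in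
lemma extHalf_mem (v : Fin n → β) : extHalf ψ n v ∈ Xpsi β (2*n) ψ := by
  rw [mem_Xpsi_iff]
  intro j
  simp only [extHalf]
  by_cases h : (j : ℕ) < n
  · have h2 : ¬ ((j.rev : ℕ) < n) := by rw [Fin.val_rev]; have := j.isLt; omega
    rw [dif_neg h2, dif_pos h]
    congr 2
    apply Fin.ext
    simp only [Fin.val_rev]
    have := j.isLt; omega
  · have h2 : (j.rev : ℕ) < n := by rw [Fin.val_rev]; have := j.isLt; omega
    rw [dif_pos h2, dif_neg h, hψ]
    congr 1
    apply Fin.ext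
    simp only [Fin.val_rev]
    have := j.isLt; omega

lemma restrHalf_extHalf (v : Fin n → β) : restrHalf n (extHalf ψ n v) = v := by
  funext i
  simp only [restrHalf, extHalf]
  rw [dif_pos (by simpa using i.isLt)]
  congr 1

lemma extHalf_restrHalf (x : Fin (2*n) → β) (hx : x ∈ Xpsi β (2*n) ψ) :
    extHalf ψ n (restrHalf n x) = x := by
  rw [mem_Xpsi_iff] at hx
  funext j
  simp only [restrHalf, extHalf]
  by_cases h : (j : ℕ) < n
  · rw [dif_pos h]
    congr 1
  · rw [dif_neg h]
    have hj := j.isLt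
    have h1 := hx (Fin.castLE (by omega : n ≤ 2*n) ⟨2*n - 1 - j, by omega⟩)
    have h2 : (Fin.castLE (by omega : n ≤ 2*n) ⟨2*n - 1 - (j:ℕ), by omega⟩).rev = j := by
      apply Fin.ext
      simp only [Fin.val_rev, Fin.coe_castLE]
      omega
    rw [h2] at h1
    exact h1.symm

include hψ in
lemma occCount_restrHalf (x : Fin (2*n) → β) (hx : x ∈ Xpsi β (2*n) ψ) (y : β) :
    occCount x y = (univ.filter fun i : Fin n => restrHalf n x i = y).card
      + (univ.filter fun i : Fin n => restrHalf n x i = ψ y).card := by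
  rw [mem_Xpsi_iff] at hx
  have hle : n ≤ 2*n := by omega
  have hsplit := Finset.card_filter_add_card_filter_not
    (s := univ.filter fun j : Fin (2*n) => x j = y) (p := fun j => (j : ℕ) < n)
  rw [Finset.filter_filter, Finset.filter_filter] at hsplit
  have hA : (univ.filter fun j : Fin (2*n) => x j = y ∧ (j : ℕ) < n)
      = (univ.filter fun i : Fin n => restrHalf n x i = y).map (Fin.castLEEmb hle) := by
    ext j
    simp only [mem_filter, mem_univ, true_and, Finset.mem_map, Fin.castLEEmb_apply]
    constructor
    · rintro ⟨hxy, hlt⟩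
      refine ⟨⟨j, hlt⟩, ?_, by apply Fin.ext; simp⟩
      simpa [restrHalf] using hxy
    · rintro ⟨i, hi, rfl⟩
      exact ⟨by simpa [restrHalf] using hi, by simpa using i.isLt⟩
  have hB : (univ.filter fun j : Fin (2*n) => x j = y ∧ ¬ (j : ℕ) < n)
      = (univ.filter fun i : Fin n => restrHalf n x i = ψ y).map
          ⟨fun i => (Fin.castLE hle i).rev,
            fun a b hab => Fin.castLE_injective hle (Fin.rev_injective hab)⟩ := by
    ext j
    simp only [mem_filter, mem_univ, true_and, Finset.mem_map,
      Function.Embedding.coeFn_mk]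
    constructor
    · rintro ⟨hxy, hge⟩
      have hj := j.isLt
      refine ⟨⟨2*n - 1 - (j:ℕ), by omega⟩, ?_, ?_⟩
      · have h1 := hx (Fin.castLE hle ⟨2*n - 1 - (j:ℕ), by omega⟩)
        have h2 : (Fin.castLE hle ⟨2*n - 1 - (j:ℕ), by omega⟩).rev = j := by
          apply Fin.ext; simp only [Fin.val_rev, Fin.coe_castLE]; omega
        rw [h2] at h1
        simp only [restrHalf]
        rw [← hψ (x (Fin.castLE hle ⟨2*n - 1 - (j:ℕ), by omega⟩)), ← h1, hxy]
      · apply Fin.ext; show ((Fin.castLE hle _).rev : ℕ) = _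
        simp only [Fin.val_rev, Fin.coe_castLE]; omega
    · rintro ⟨i, hi, rfl⟩
      have hi' := i.isLt
      constructor
      · have h1 := hx (Fin.castLE hle i)
        show x (Fin.castLE hle i).rev = y
        rw [h1]
        simp only [restrHalf] at hi
        rw [hi, hψ]
      · show ¬ ((Fin.castLE hle i).rev : ℕ) < n
        simp only [Fin.val_rev, Fin.coe_castLE]; omega
  rw [hA, hB, Finset.card_map, Finset.card_map] at hsplit
  exact (by simpa [occCount] using hsplit.symm)

include hψ in
lemma card_filter_Xpsi (P : (Fin n → β) → Prop) [DecidablePred P] :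
    ((Xpsi β (2*n) ψ).filter fun x => P (restrHalf n x)).card
      = (univ.filter P).card := by
  apply Finset.card_nbij' (restrHalf n) (extHalf ψ n)
  · intro x hx
    rw [mem_coe, mem_filter] at hx ⊢
    exact ⟨mem_univ _, hx.2⟩
  · intro v hv
    rw [mem_coe, mem_filter] at hv ⊢
    exact ⟨extHalf_mem hψ n v, by rw [restrHalf_extHalf]; exact hv.2⟩
  · intro x hx
    exact extHalf_restrHalf n x (mem_filter.mp hx).1
  · intro v _
    exact restrHalf_extHalf n v

include hψ in
lemma sum_mCount (hcard : Fintype.card β = 2*n) (m : ℕ) :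
    ∑ x ∈ Xpsi β (2*n) ψ, mCount x (2*m)
      = (fixPts β ψ).card * (n.choose m * (2*n-1)^(n-m))
        + (2*n - (fixPts β ψ).card) * (n.choose (2*m) * 2^(2*m) * (2*n-2)^(n-2*m)) := by
  have hswap : ∑ x ∈ Xpsi β (2*n) ψ, mCount x (2*m)
      = ∑ y : β, ((Xpsi β (2*n) ψ).filter fun x => occCount x y = 2*m).card := by
    simp only [mCount, Finset.card_filter]
    rw [Finset.sum_comm]
  rw [hswap]
  have hy : ∀ y : β, ((Xpsi β (2*n) ψ).filter fun x => occCount x y = 2*m).card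
      = if ψ y = y then n.choose m * (2*n-1)^(n-m)
        else n.choose (2*m) * 2^(2*m) * (2*n-2)^(n-2*m) := by
    intro y
    have hfc : ((Xpsi β (2*n) ψ).filter fun x => occCount x y = 2*m)
        = (Xpsi β (2*n) ψ).filter fun x =>
            ((univ.filter fun i : Fin n => restrHalf n x i = y).card
              + (univ.filter fun i : Fin n => restrHalf n x i = ψ y).card = 2*m) := by
      apply Finset.filter_congr
      intro x hx
      rw [occCount_restrHalf hψ n x hx y]
    rw [hfc,
      card_filter_Xpsi hψ n (fun v => (univ.filter fun i : Fin n => v i = y).card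
        + (univ.filter fun i : Fin n => v i = ψ y).card = 2*m)]
    by_cases hfix : ψ y = y
    · rw [if_pos hfix]
      have heq : ((univ : Finset (Fin n → β)).filter fun v =>
          (univ.filter fun i => v i = y).card + (univ.filter fun i => v i = ψ y).card = 2*m)
          = (univ : Finset (Fin n → β)).filter fun v =>
              (univ.filter fun i => v i ∈ ({y} : Finset β)).card = m := by
        apply Finset.filter_congr
        intro v _
        simp only [hfix, mem_singleton]
        omega
      rw [heq, count_pi, hcard, Finset.card_singleton]
      simp
    · rw [if_neg hfix]
      have hne : y ≠ ψ y := fun h => hfix h.symm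
      have heq : ((univ : Finset (Fin n → β)).filter fun v =>
          (univ.filter fun i => v i = y).card + (univ.filter fun i => v i = ψ y).card = 2*m)
          = (univ : Finset (Fin n → β)).filter fun v =>
              (univ.filter fun i => v i ∈ ({y, ψ y} : Finset β)).card = 2*m := by
        apply Finset.filter_congr
        intro v _
        have hu : (univ.filter fun i : Fin n => v i ∈ ({y, ψ y} : Finset β))
            = (univ.filter fun i : Fin n => v i = y)
              ∪ (univ.filter fun i : Fin n => v i = ψ y) := by
          ext i
          simp [mem_insert, mem_singleton]
        have hd : Disjoint (univ.filter fun i : Fin n => v i = y)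
            (univ.filter fun i : Fin n => v i = ψ y) := by
          rw [Finset.disjoint_left]
          intro i hi1 hi2
          rw [mem_filter] at hi1 hi2
          exact hne (hi1.2.symm.trans hi2.2)
        rw [hu, Finset.card_union_of_disjoint hd]
      rw [heq, count_pi, hcard, Finset.card_pair hne]
  rw [Finset.sum_congr rfl (fun y _ => hy y), Finset.sum_ite, Finset.sum_const,
    Finset.sum_const, smul_eq_mul, smul_eq_mul]
  have h1 : (univ.filter fun y : β => ψ y = y) = fixPts β ψ := rfl
  have h2 : (univ.filter fun y : β => ¬ ψ y = y).card = 2*n - (fixPts β ψ).card := by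
    have h3 := Finset.card_filter_add_card_filter_not
      (s := (univ : Finset β)) (p := fun y => ψ y = y)
    rw [Finset.card_univ, hcard, h1] at h3
    omega
  rw [h1, h2]
end S1


lemma helper1 (i : ℝ) :
    Tendsto (fun n : ℕ => ((n : ℝ) - i) / (2 * n)) atTop (nhds (1/2)) := by
  have h : Tendsto (fun n : ℕ => 1/2 - (i/2) / n) atTop (nhds (1/2 - 0)) :=
    tendsto_const_nhds.sub (tendsto_const_div_atTop_nhds_zero_nat (i/2))
  rw [sub_zero] at h
  apply h.congr'
  filter_upwards [eventually_ge_atTop 1] with n hn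
  have hn' : (n : ℝ) ≠ 0 := by positivity
  field_simp

lemma helper2 (s : ℝ) :
    Tendsto (fun n : ℕ => (1 - s / (2 * (n:ℝ))) ^ n) atTop (nhds (Real.exp (-(s/2)))) := by
  have h := Real.tendsto_one_add_div_pow_exp (-(s/2))
  apply h.congr
  intro n
  rw [show (1 : ℝ) + -(s/2) / (n:ℝ) = 1 - s / (2 * (n:ℝ)) by ring]

lemma helper3 (s : ℝ) (m : ℕ) :
    Tendsto (fun n : ℕ => (1 - s / (2 * (n:ℝ))) ^ m) atTop (nhds 1) := by
  have hb : Tendsto (fun n : ℕ => 1 - s / (2 * (n:ℝ))) atTop (nhds 1) := by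
    have h : Tendsto (fun n : ℕ => (1:ℝ) - (s/2) / n) atTop (nhds (1 - 0)) :=
      tendsto_const_nhds.sub (tendsto_const_div_atTop_nhds_zero_nat (s/2))
    rw [sub_zero] at h
    apply h.congr
    intro n
    rw [div_div]
  simpa using hb.pow m

set_option maxHeartbeats 1000000 in
lemma tendsto_main (m : ℕ) (s : ℝ) (hs : 0 < s) :
    Tendsto (fun n : ℕ => (n.choose m : ℝ) * (2*(n:ℝ) - s) ^ (n - m) / (2*(n:ℝ)) ^ n)
      atTop (nhds (Real.exp (-(s/2)) / ((m.factorial : ℝ) * 2 ^ m))) := by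
  have hprod : Tendsto (fun n : ℕ => ∏ i ∈ range m, (((n:ℝ) - i) / (2 * n))) atTop
      (nhds ((1/2 : ℝ) ^ m)) := by
    have := tendsto_finset_prod (range m) (fun i _ => helper1 (i : ℝ))
    simpa [Finset.prod_const] using this
  have hg : Tendsto (fun n : ℕ => ((m.factorial : ℝ))⁻¹
      * (∏ i ∈ range m, (((n:ℝ) - i) / (2 * n)))
      * ((1 - s / (2 * (n:ℝ))) ^ n / (1 - s / (2 * (n:ℝ))) ^ m)) atTop
      (nhds (((m.factorial : ℝ))⁻¹ * (1/2)^m * (Real.exp (-(s/2)) / 1))) := by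
    exact ((tendsto_const_nhds.mul hprod).mul ((helper2 s).div (helper3 s m) one_ne_zero))
  have hlimeq : ((m.factorial : ℝ))⁻¹ * (1/2)^m * (Real.exp (-(s/2)) / 1)
      = Real.exp (-(s/2)) / ((m.factorial : ℝ) * 2 ^ m) := by
    have : (m.factorial : ℝ) ≠ 0 := by positivity
    field_simp
    rw [← mul_pow]; norm_num
  rw [hlimeq] at hg
  apply hg.congr'
  filter_upwards [eventually_ge_atTop (m + ⌈s⌉₊ + 1)] with n hn
  have hnm : m ≤ n := by omega
  have hn1 : 1 ≤ n := by omega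
  have hns : s < 2 * (n : ℝ) := by
    have h1 : s ≤ (⌈s⌉₊ : ℝ) := Nat.le_ceil s
    have h2 : (⌈s⌉₊ : ℝ) < 2 * n := by
      have : (⌈s⌉₊ : ℝ) < (n : ℝ) + (n:ℝ) := by
        have hcn : ⌈s⌉₊ < n := by omega
        have : ((⌈s⌉₊:ℕ) : ℝ) < (n:ℝ) := by exact_mod_cast hcn
        have hn0 : (0:ℝ) ≤ n := Nat.cast_nonneg n
        linarith
      linarith [this]
    linarith
  have h2n : (2 * (n:ℝ)) ≠ 0 := by positivity
  have hbase : (1 : ℝ) - s / (2 * n) ≠ 0 := by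
    have : s / (2 * (n:ℝ)) < 1 := by
      rw [div_lt_one (by positivity)]
      exact hns
    linarith
  have hchoose : (n.choose m : ℝ) = (∏ i ∈ range m, ((n:ℝ) - i)) / (m.factorial : ℝ) := by
    have hd := Nat.descFactorial_eq_factorial_mul_choose n m
    have hdp : ((n.descFactorial m : ℕ) : ℝ) = ∏ i ∈ range m, ((n:ℝ) - i) := by
      rw [Nat.descFactorial_eq_prod_range]
      push_cast
      apply Finset.prod_congr rfl
      intro i hi
      rw [Finset.mem_range] at hi
      rw [Nat.cast_sub (by omega)]
    have : ((n.descFactorial m : ℕ) : ℝ) = (m.factorial : ℝ) * (n.choose m : ℝ) := by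
      rw [hd]; push_cast; ring
    rw [hdp] at this
    rw [this, mul_comm, mul_div_assoc, div_self (by positivity : (m.factorial:ℝ) ≠ 0), mul_one]
  -- now algebraic identity
  have hfact : (m.factorial : ℝ) ≠ 0 := by positivity
  have hsplit1 : (2*(n:ℝ) - s) ^ (n - m)
      = (2*(n:ℝ))^(n-m) * (1 - s/(2*(n:ℝ)))^(n-m) := by
    rw [← mul_pow]
    congr 1
    field_simp
  have hsplit2 : ((1:ℝ) - s/(2*(n:ℝ)))^(n-m)
      = (1 - s/(2*(n:ℝ)))^n * ((1 - s/(2*(n:ℝ)))^m)⁻¹ := pow_sub₀ _ hbase hnm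
  have hsplit3 : (2*(n:ℝ))^(n-m) = (2*(n:ℝ))^n * ((2*(n:ℝ))^m)⁻¹ := pow_sub₀ _ h2n hnm
  have hprodsplit : (∏ i ∈ range m, (((n:ℝ) - i) / (2 * n)))
      = (∏ i ∈ range m, ((n:ℝ) - i)) / (2*(n:ℝ))^m := by
    rw [Finset.prod_div_distrib, Finset.prod_const, Finset.card_range]
  rw [hchoose, hsplit1, hsplit2, hsplit3, hprodsplit]
  have hpow2n : (2*(n:ℝ))^n ≠ 0 := pow_ne_zero _ h2n
  have hpow2m : (2*(n:ℝ))^m ≠ 0 := pow_ne_zero _ h2n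
  have hpowbm : ((1:ℝ) - s/(2*(n:ℝ)))^m ≠ 0 := pow_ne_zero _ hbase
  have hn0 : (n:ℝ) ≠ 0 := by positivity
  have hns' : (n:ℝ)*2 - s ≠ 0 := sub_ne_zero.mpr (by linarith)
  have hns2 : 2*(n:ℝ) - s ≠ 0 := sub_ne_zero.mpr (by linarith)
  have h20 : (2:ℝ) ≠ 0 := two_ne_zero
  field_simp



theorem stmt_11 (α : ℕ → Type*) [∀ n, Fintype (α n)] [∀ n, DecidableEq (α n)]
    (hcard : ∀ n : ℕ, 1 ≤ n → Fintype.card (α n) = 2 * n)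
    (ψ : ∀ n, α n → α n) (hψ : ∀ n y, ψ n (ψ n y) = y)
    (θ η C : ℝ) (hθ0 : 0 ≤ θ) (hθ1 : θ ≤ 1) (hη0 : 0 ≤ η) (hη1 : η < 1) (hC : 0 < C)
    (hfix : ∀ n : ℕ, 1 ≤ n →
      |((fixPts (α n) (ψ n)).card : ℝ) - θ * (2 * (n : ℝ))| ≤ C * (2 * (n : ℝ)) ^ η)
    (k : ℕ) (hk : Even k) :
    Filter.Tendsto
      (fun n : ℕ => ((2 * (n : ℝ)) ^ n)⁻¹ *
        ∑ x ∈ Xpsi (α n) (2 * n) (ψ n), (mCount x k : ℝ) / (2 * (n : ℝ)))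
      Filter.atTop
      (nhds ((1 - θ) / (Real.exp 1 * k.factorial)
        + θ / (Real.exp (1 / 2) * 2 ^ (k / 2) * (k / 2).factorial))) := by
  obtain ⟨r, rfl⟩ := hk
  rw [show r + r = 2 * r from (two_mul r).symm, show 2 * r / 2 = r by omega]
  set F : ℕ → ℕ := fun n => (fixPts (α n) (ψ n)).card with hF
  -- limit of the fixed point ratio
  have hu : Tendsto (fun n : ℕ => (F n : ℝ) / (2 * (n:ℝ))) atTop (nhds θ) := by
    have hb : Tendsto (fun n : ℕ => C * (2 * (n:ℝ)) ^ (η - 1)) atTop (nhds 0) := by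
      have h1 : Tendsto (fun x : ℝ => x ^ (η - 1)) atTop (nhds 0) := by
        have := tendsto_rpow_neg_atTop (by linarith : (0:ℝ) < 1 - η)
        simpa [show -(1 - η) = η - 1 by ring] using this
      have h2 : Tendsto (fun n : ℕ => 2 * (n:ℝ)) atTop atTop :=
        (tendsto_natCast_atTop_atTop).const_mul_atTop two_pos
      have h3 := (h1.comp h2).const_mul C
      simpa using h3
    have hsq : Tendsto (fun n : ℕ => (F n : ℝ) / (2 * (n:ℝ)) - θ) atTop (nhds 0) := by
      apply squeeze_zero_norm' _ hb
      filter_upwards [eventually_ge_atTop 1] with n hn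
      have hn0 : (0:ℝ) < 2 * (n:ℝ) := by
        have : (1:ℝ) ≤ (n:ℝ) := by exact_mod_cast hn
        linarith
      have habs : ‖(F n : ℝ) / (2 * (n:ℝ)) - θ‖
          = |((F n : ℝ)) - θ * (2 * (n:ℝ))| / (2 * (n:ℝ)) := by
        rw [Real.norm_eq_abs,
          show (F n : ℝ)/(2*(n:ℝ)) - θ = ((F n : ℝ) - θ*(2*(n:ℝ)))/(2*(n:ℝ)) by field_simp,
          abs_div, abs_of_pos hn0]
      rw [habs]
      have hfx := hfix n hn
      have hstep : |((F n : ℝ)) - θ * (2 * (n:ℝ))| / (2 * (n:ℝ))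
          ≤ C * (2 * (n:ℝ)) ^ η / (2 * (n:ℝ)) := by
        gcongr
      refine hstep.trans (le_of_eq ?_)
      rw [mul_div_assoc, Real.rpow_sub hn0, Real.rpow_one]
    have := hsq.add_const θ
    simpa using this
  -- limits of the two combinatorial ratios
  have hp := tendsto_main r 1 one_pos
  have hq := (tendsto_main (2*r) 2 two_pos).const_mul ((2:ℝ)^(2*r))
  have hg : Tendsto (fun n : ℕ =>
      ((F n : ℝ) / (2 * (n:ℝ))) * ((n.choose r : ℝ) * (2*(n:ℝ) - 1) ^ (n - r) / (2*(n:ℝ)) ^ n)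
      + (1 - (F n : ℝ) / (2 * (n:ℝ)))
        * ((2:ℝ)^(2*r) * ((n.choose (2*r) : ℝ) * (2*(n:ℝ) - 2) ^ (n - 2*r) / (2*(n:ℝ)) ^ n)))
      atTop (nhds (θ * (Real.exp (-(1/2)) / ((r.factorial : ℝ) * 2 ^ r))
        + (1 - θ) * ((2:ℝ)^(2*r) * (Real.exp (-(2/2)) / (((2*r).factorial : ℝ) * 2 ^ (2*r)))))) :=
    (hu.mul hp).add ((tendsto_const_nhds.sub hu).mul hq)
  have hL : θ * (Real.exp (-(1/2)) / ((r.factorial : ℝ) * 2 ^ r))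
      + (1 - θ) * ((2:ℝ)^(2*r) * (Real.exp (-(2/2)) / (((2*r).factorial : ℝ) * 2 ^ (2*r))))
      = (1 - θ) / (Real.exp 1 * ((2*r).factorial : ℝ))
        + θ / (Real.exp (1/2) * 2 ^ r * (r.factorial : ℝ)) := by
    have h1 : (-(2/2) : ℝ) = -1 := by norm_num
    rw [h1, Real.exp_neg, Real.exp_neg]
    have e1 : Real.exp 1 ≠ 0 := Real.exp_ne_zero 1
    have e2 : Real.exp (1/2) ≠ 0 := Real.exp_ne_zero _
    have f1 : ((r.factorial : ℝ)) ≠ 0 := by positivity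
    have f2 : (((2*r).factorial : ℝ)) ≠ 0 := by positivity
    have p1 : ((2:ℝ) ^ r) ≠ 0 := by positivity
    have p2 : ((2:ℝ) ^ (2*r)) ≠ 0 := by positivity
    field_simp
    ring
  rw [← hL]
  apply hg.congr'
  filter_upwards [eventually_ge_atTop (2*r + 1)] with n hn
  have hn1 : 1 ≤ n := by omega
  have hcn := hcard n hn1
  have hsum := sum_mCount (hψ n) n hcn r
  change _ = F n * (n.choose r * (2*n-1)^(n-r)) + (2*n - F n) * (n.choose (2*r) * 2^(2*r) * (2*n-2)^(n-2*r)) at hsum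
  have hF2n : F n ≤ 2 * n :=
    le_trans (Finset.card_le_univ _) (le_of_eq hcn)
  have hcast : ∑ x ∈ Xpsi (α n) (2*n) (ψ n), (mCount x (2*r) : ℝ) / (2 * (n:ℝ))
      = ((∑ x ∈ Xpsi (α n) (2*n) (ψ n), mCount x (2*r) : ℕ) : ℝ) / (2 * (n:ℝ)) := by
    rw [← Finset.sum_div, Nat.cast_sum]
  have hn0 : (2 * (n:ℝ)) ≠ 0 := by positivity
  have hpn : ((2 * (n:ℝ)) ^ n) ≠ 0 := by positivity
  rw [hcast, hsum]
  have c1 : ((2*n - 1 : ℕ) : ℝ) = 2*(n:ℝ) - 1 := by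
    rw [Nat.cast_sub (by omega)]; push_cast; ring
  have c2 : ((2*n - 2 : ℕ) : ℝ) = 2*(n:ℝ) - 2 := by
    rw [Nat.cast_sub (by omega)]; push_cast; ring
  have c3 : ((2*n - F n : ℕ) : ℝ) = 2*(n:ℝ) - (F n : ℝ) := by
    rw [Nat.cast_sub hF2n]; push_cast; ring
  push_cast [c1, c2, c3]
  field_simp
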